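/- Let R be a standard graded quotient of k[x₁,…,x_n] and f ∈ R_d homogeneous of degree d. Then the Hilbert series satisfies (R/(f))(u) ≥ [(1 − u^d) R(u)]_+ coefficientwise, where [Σ aᵢ uⁱ]_+ keeps aᵢ if all aⱼ > 0 for j ≤ i and is 0 otherwise. -/
import Mathlib


open MvPolynomial

/-- The graded Hilbert function of `k[x₁,…,x_n]/I` in the standard grading. -/
noncomputable def hilb1 (k : Type*) [Field k] (n : ℕ)
    (I : Ideal (MvPolynomial (Fin n) k)) (t : ℕ) : ℕ :=
  Module.finrank k
    ((homogeneousSubmodule (Fin n) k t).map (Ideal.Quotient.mkₐ k I).toLinearMap)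

open scoped Classical in
/-- The univariate truncation `[·]_+`. -/
noncomputable def trunc1 (A : ℕ → ℤ) : ℕ → ℤ :=
  fun t => if ∀ s ≤ t, 0 < A s then A t else 0

/-- Multiplication of a power series (given by its coefficients) by `(1 - u^d)`. -/
noncomputable def mulOneSub1 (d : ℕ) (A : ℕ → ℤ) : ℕ → ℤ :=
  fun t => A t - (if d ≤ t then A (t - d) else 0)

private lemma hC_mul_homog {k : Type*} [Field k] {n d t : ℕ}
    {F : MvPolynomial (Fin n) k} (hF : F.IsHomogeneous d) (g : MvPolynomial (Fin n) k) :
    homogeneousComponent t (F * g) =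
      if d ≤ t then F * homogeneousComponent (t - d) g else 0 := by
  conv_lhs => rw [← sum_homogeneousComponent g, Finset.mul_sum, map_sum]
  have key : ∀ s : ℕ, homogeneousComponent t (F * homogeneousComponent s g)
      = if t = d + s then F * homogeneousComponent s g else 0 := fun s =>
    homogeneousComponent_of_mem
      ((mem_homogeneousSubmodule _ _).2 (hF.mul (homogeneousComponent_isHomogeneous s g)))
  simp only [key]
  by_cases hdt : d ≤ t
  · rw [if_pos hdt]
    have hcond : ∀ s : ℕ, (t = d + s) ↔ (s = t - d) := by omega
    rw [Finset.sum_congr rfl (fun s _ => by rw [if_congr (hcond s) rfl rfl])]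
    rw [Finset.sum_ite_eq' (Finset.range (g.totalDegree + 1)) (t - d)
      (fun s => F * homogeneousComponent s g)]
    split_ifs with h
    · rfl
    · rw [homogeneousComponent_eq_zero, mul_zero]
      simp only [Finset.mem_range, not_lt] at h
      omega
  · rw [if_neg hdt]
    apply Finset.sum_eq_zero
    intro s _
    rw [if_neg (by omega)]

attribute [local instance] MvPolynomial.gradedAlgebra

private lemma fd_homog (k : Type*) [Field k] (n t : ℕ) :
    FiniteDimensional k (homogeneousSubmodule (Fin n) k t) := by
  have hle : homogeneousSubmodule (Fin n) k t ≤ restrictTotalDegree (Fin n) k t := by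
    intro p hp
    rw [mem_restrictTotalDegree]
    exact ((mem_homogeneousSubmodule _ _).1 hp).totalDegree_le
  exact Module.Finite.equiv (Submodule.comapSubtypeEquivOfLe hle)

set_option maxHeartbeats 1000000 in
/-- Let `R = k[x₁,…,x_n]/I` be a standard graded quotient and `f ∈ R_d` homogeneous
of degree `d` (represented by a homogeneous polynomial `F`). Then
`(R/(f))(u) ≥ [(1 − u^d)·R(u)]_+` coefficientwise. -/
theorem hilb1_quotient_ge_trunc (k : Type*) [Field k] (n : ℕ)
    (I : Ideal (MvPolynomial (Fin n) k))
    (hI : ∃ G : Set (MvPolynomial (Fin n) k),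
      (∀ g ∈ G, ∃ t : ℕ, g.IsHomogeneous t) ∧ I = Ideal.span G)
    (d : ℕ) (F : MvPolynomial (Fin n) k) (hF : F.IsHomogeneous d) :
    ∀ t : ℕ,
      (hilb1 k n (I ⊔ Ideal.span {F}) t : ℤ) ≥
        trunc1 (mulOneSub1 d (fun s => (hilb1 k n I s : ℤ))) t := by
  classical
  intro t
  haveI := fd_homog k n t
  haveI := fd_homog k n (t - d)
  set J := Ideal.span {F} with hJdef
  -- homogeneous components of elements of I stay in I
  have hIcomp : ∀ {p : MvPolynomial (Fin n) k}, p ∈ I → ∀ s, homogeneousComponent s p ∈ I := by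
    obtain ⟨G, hG, rfl⟩ := hI
    have hIhom : Ideal.IsHomogeneous (homogeneousSubmodule (Fin n) k) (Ideal.span G) :=
      Ideal.homogeneous_span _ _ fun g hg => by
        obtain ⟨s, hs⟩ := hG g hg
        exact ⟨s, (mem_homogeneousSubmodule _ _).2 hs⟩
    intro p hp s
    have h := hIhom s hp
    rwa [← DirectSum.Decomposition.decompose'_eq, decomposition.decompose'_apply] at h
  set q1 := (Ideal.Quotient.mkₐ k I).toLinearMap with hq1def
  set q2 := (Ideal.Quotient.mkₐ k (I ⊔ J)).toLinearMap with hq2def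
  have hle : I ≤ (I ⊔ J).comap (AlgHom.id k (MvPolynomial (Fin n) k)) :=
    fun x hx => Ideal.mem_sup_left hx
  set π := Ideal.quotientMapₐ (I ⊔ J) (AlgHom.id k (MvPolynomial (Fin n) k)) hle with hπdef
  set V := homogeneousSubmodule (Fin n) k t with hVdef
  set V' := homogeneousSubmodule (Fin n) k (t - d) with hV'def
  set W := V.map q1 with hWdef
  set μ : (MvPolynomial (Fin n) k ⧸ I) →ₗ[k] (MvPolynomial (Fin n) k ⧸ I) :=
    LinearMap.mulLeft k (Ideal.Quotient.mkₐ k I F) with hμdef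
  set π' := π.toLinearMap.comp W.subtype with hπ'def
  haveI : Module.Finite k W := Module.Finite.map V q1
  have hcomm : ∀ x : MvPolynomial (Fin n) k, π (q1 x) = q2 x := fun x => rfl
  have hrange : LinearMap.range π' = V.map q2 := by
    rw [hπ'def, LinearMap.range_comp, Submodule.range_subtype, hWdef, ← Submodule.map_comp]
    congr 1
  have hrn : Module.finrank k (LinearMap.range π') + Module.finrank k (LinearMap.ker π')
      = Module.finrank k W := LinearMap.finrank_range_add_finrank_ker π'
  have e1 : hilb1 k n (I ⊔ J) t = Module.finrank k (LinearMap.range π') := by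
    rw [hrange]; rfl
  have e2 : hilb1 k n I t = Module.finrank k W := rfl
  -- every element of the kernel comes from a homogeneous component of a multiple of F
  have hker_mem : ∀ w ∈ Submodule.map W.subtype (LinearMap.ker π'),
      ∃ a : MvPolynomial (Fin n) k, w = q1 (homogeneousComponent t (F * a)) := by
    rintro w ⟨⟨w', hw'⟩, hx, rfl⟩
    obtain ⟨v, hv, rfl⟩ := hw'
    have hx' : q2 v = 0 := by rw [← hcomm v]; exact hx
    have hvIJ : v ∈ I ⊔ J := by
      rw [hq2def] at hx'
      simp only [AlgHom.toLinearMap_apply, Ideal.Quotient.mkₐ_eq_mk] at hx'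
      rwa [Ideal.Quotient.eq_zero_iff_mem] at hx'
    obtain ⟨i, hi, j, hj, hij⟩ := Submodule.mem_sup.1 hvIJ
    obtain ⟨a, ha⟩ := Ideal.mem_span_singleton'.1 hj
    refine ⟨a, ?_⟩
    have hvv : homogeneousComponent t v = v := by
      rw [homogeneousComponent_of_mem hv, if_pos rfl]
    have hsplit : v = homogeneousComponent t i + homogeneousComponent t (F * a) := by
      conv_lhs => rw [← hvv, ← hij, ← ha, map_add, mul_comm a F]
    have h1 : q1 (homogeneousComponent t i) = 0 := by
      rw [hq1def]
      simp only [AlgHom.toLinearMap_apply, Ideal.Quotient.mkₐ_eq_mk]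
      rw [Ideal.Quotient.eq_zero_iff_mem]
      exact hIcomp hi t
    show q1 v = _
    conv_lhs => rw [hsplit]
    rw [map_add, h1, zero_add]
  rcases le_or_gt d t with hdt | hdt
  · -- d ≤ t : kernel is contained in μ(q1(V'))
    haveI : Module.Finite k (V'.map q1) := Module.Finite.map V' q1
    haveI : Module.Finite k ((V'.map q1).map μ) := Module.Finite.map (V'.map q1) μ
    have hkerle : Submodule.map W.subtype (LinearMap.ker π') ≤ (V'.map q1).map μ := by
      intro w hw
      obtain ⟨a, rfl⟩ := hker_mem w hw
      rw [hC_mul_homog hF a, if_pos hdt]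
      refine ⟨q1 (homogeneousComponent (t - d) a),
        ⟨homogeneousComponent (t - d) a,
          (mem_homogeneousSubmodule _ _).2 (homogeneousComponent_isHomogeneous (t - d) a), rfl⟩, ?_⟩
      rw [hμdef, hq1def]
      simp only [LinearMap.mulLeft_apply, AlgHom.toLinearMap_apply, Ideal.Quotient.mkₐ_eq_mk,
        ← map_mul]
    have hkerb : Module.finrank k (LinearMap.ker π') ≤ hilb1 k n I (t - d) := by
      have hf1 : Module.finrank k (LinearMap.ker π')
          = Module.finrank k (Submodule.map W.subtype (LinearMap.ker π')) :=
        (Submodule.equivMapOfInjective W.subtype (Submodule.injective_subtype W)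
          (LinearMap.ker π')).finrank_eq
      have hf2 := Submodule.finrank_mono hkerle
      have hf3 : Module.finrank k ((V'.map q1).map μ) ≤ Module.finrank k (V'.map q1) :=
        Submodule.finrank_map_le μ (V'.map q1)
      have hf4 : hilb1 k n I (t - d) = Module.finrank k (V'.map q1) := rfl
      omega
    have hq : hilb1 k n (I ⊔ J) t + Module.finrank k (LinearMap.ker π') = hilb1 k n I t := by
      rw [e1, e2]; exact hrn
    have main : (hilb1 k n (I ⊔ J) t : ℤ) ≥ mulOneSub1 d (fun s => (hilb1 k n I s : ℤ)) t := by
      simp only [mulOneSub1, if_pos hdt]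
      omega
    unfold trunc1
    split_ifs with h
    · exact main
    · exact Int.natCast_nonneg _
  · -- t < d : kernel is trivial
    have hkerbot : LinearMap.ker π' = ⊥ := by
      rw [← le_bot_iff]
      intro x hx
      have hx0 : W.subtype x ∈ Submodule.map W.subtype (LinearMap.ker π') := ⟨x, hx, rfl⟩
      obtain ⟨a, ha⟩ := hker_mem _ hx0
      rw [hC_mul_homog hF a, if_neg (not_le.2 hdt), map_zero] at ha
      have hco : (x : MvPolynomial (Fin n) k ⧸ I) = 0 := ha
      rw [Submodule.mem_bot]
      exact Subtype.ext hco
    have hq : hilb1 k n (I ⊔ J) t = hilb1 k n I t := by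
      rw [e1, e2, ← hrn, hkerbot, finrank_bot, add_zero]
    have main : (hilb1 k n (I ⊔ J) t : ℤ) ≥ mulOneSub1 d (fun s => (hilb1 k n I s : ℤ)) t := by
      simp only [mulOneSub1, if_neg (not_le.2 hdt)]
      omega
    unfold trunc1
    split_ifs with h
    · exact main
    · exact Int.natCast_nonneg _
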